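/- Let M > 0, Q ≠ 0, Λ > 0 and s ∈ (0,1] satisfy 8Q² < 9sM² (so that Λ₋ and Λ₊ are defined and real), and assume Λ₋ < Λ < Λ₊ as well as 0 < Λ < Λ₊. Then there exists r₀ > 0 such that P(r₀,s) = 0 and P'(r₀,s) < 0. -/

import Mathlib

noncomputable section

/-- The quartic polynomial `P(r,s) = sL/3*r^4 - r^2 + 2sM*r - sQ^2` (case `Q != 0`). -/
def P (M Q Λ s r : ℝ) : ℝ := s * Λ / 3 * r ^ 4 - r ^ 2 + 2 * s * M * r - s * Q ^ 2

/-- First derivative of `P` with respect to `r`. -/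
def P' (M Q Λ s r : ℝ) : ℝ := 4 * s * Λ / 3 * r ^ 3 - 2 * r + 2 * s * M

/-- Second derivative of `P` with respect to `r`. -/
def P'' (M Q Λ s r : ℝ) : ℝ := 4 * s * Λ * r ^ 2 - 2

/-- `Λ₋`, defined for `β := 9sM² − 8Q² ≥ 0`. -/
def Λminus (M Q s : ℝ) : ℝ :=
  1 / (32 * s ^ 2 * Q ^ 6) *
    (8 * Q ^ 4 - (9 * s * M ^ 2 - 8 * Q ^ 2) * (9 * s * M ^ 2 - 8 * Q ^ 2 + 4 * Q ^ 2)
      - 3 * Real.sqrt (s * M ^ 2 * (9 * s * M ^ 2 - 8 * Q ^ 2) ^ 3))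

/-- `Λ₊`, defined for `β := 9sM² − 8Q² ≥ 0`. -/
def Λplus (M Q s : ℝ) : ℝ :=
  1 / (32 * s ^ 2 * Q ^ 6) *
    (8 * Q ^ 4 - (9 * s * M ^ 2 - 8 * Q ^ 2) * (9 * s * M ^ 2 - 8 * Q ^ 2 + 4 * Q ^ 2)
      + 3 * Real.sqrt (s * M ^ 2 * (9 * s * M ^ 2 - 8 * Q ^ 2) ^ 3))

set_option maxHeartbeats 2000000 in
/-- Case C₁: existence of a simple root `r₀ > 0` with negative derivative. -/
theorem exists_r0_case_C1 (M Q Λ s : ℝ)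
    (hM : 0 < M) (hQ : Q ≠ 0) (hΛ : 0 < Λ) (hs0 : 0 < s) (hs1 : s ≤ 1)
    (hβ : 8 * Q ^ 2 < 9 * s * M ^ 2)
    (hlo : Λminus M Q s < Λ) (hhi : Λ < Λplus M Q s) :
    ∃ r₀ : ℝ, 0 < r₀ ∧ P M Q Λ s r₀ = 0 ∧ P' M Q Λ s r₀ < 0 := by
  have hQ2 : (0:ℝ) < Q ^ 2 := by positivity
  have hβpos : (0:ℝ) < 9 * s * M ^ 2 - 8 * Q ^ 2 := by linarith
  have hu : (0:ℝ) < s * (9 * s * M ^ 2 - 8 * Q ^ 2) := mul_pos hs0 hβpos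
  set t := Real.sqrt (s * (9 * s * M ^ 2 - 8 * Q ^ 2)) with htdef
  have ht0 : 0 < t := Real.sqrt_pos.2 hu
  have ht2 : t ^ 2 = 9 * s ^ 2 * M ^ 2 - 8 * s * Q ^ 2 := by
    rw [htdef, Real.sq_sqrt hu.le]; ring
  have hsq : Real.sqrt (s * M ^ 2 * (9 * s * M ^ 2 - 8 * Q ^ 2) ^ 3)
      = M * (9 * s * M ^ 2 - 8 * Q ^ 2) * t := by
    rw [show s * M ^ 2 * (9 * s * M ^ 2 - 8 * Q ^ 2) ^ 3
        = (M * (9 * s * M ^ 2 - 8 * Q ^ 2) * t) ^ 2 by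
      linear_combination (-(M ^ 2 * (9 * s * M ^ 2 - 8 * Q ^ 2) ^ 2)) * ht2]
    exact Real.sqrt_sq (by positivity)
  have htlt : t < 3 * s * M := by
    have h2 : t ^ 2 < (3 * s * M) ^ 2 := by
      rw [ht2]; nlinarith [mul_pos hs0 hQ2]
    exact lt_of_pow_lt_pow_left₀ 2 (by positivity) h2
  have hρm0 : 0 < (3 * s * M - t) / 2 := by linarith
  have hρp0 : 0 < (3 * s * M + t) / 2 := by linarith
  have hmp : (3 * s * M - t) / 2 < (3 * s * M + t) / 2 := by linarith
  have h96 : (0:ℝ) < 96 * s ^ 2 * Q ^ 6 := by positivity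
  have h32 : (0:ℝ) < 32 * s ^ 2 * Q ^ 6 := by positivity
  -- value of the thresholds times 32 s² Q⁶
  have hLm : Λminus M Q s * (32 * s ^ 2 * Q ^ 6)
      = 8 * Q ^ 4 - (9 * s * M ^ 2 - 8 * Q ^ 2) * (9 * s * M ^ 2 - 8 * Q ^ 2 + 4 * Q ^ 2)
        - 3 * (M * (9 * s * M ^ 2 - 8 * Q ^ 2) * t) := by
    unfold Λminus; rw [hsq]; field_simp
  have hLp : Λplus M Q s * (32 * s ^ 2 * Q ^ 6)
      = 8 * Q ^ 4 - (9 * s * M ^ 2 - 8 * Q ^ 2) * (9 * s * M ^ 2 - 8 * Q ^ 2 + 4 * Q ^ 2)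
        + 3 * (M * (9 * s * M ^ 2 - 8 * Q ^ 2) * t) := by
    unfold Λplus; rw [hsq]; field_simp
  have hXm : 8 * Q ^ 4 - (9 * s * M ^ 2 - 8 * Q ^ 2) * (9 * s * M ^ 2 - 8 * Q ^ 2 + 4 * Q ^ 2)
        - 3 * (M * (9 * s * M ^ 2 - 8 * Q ^ 2) * t) < 32 * s ^ 2 * Q ^ 6 * Λ := by
    have := mul_lt_mul_of_pos_right hlo h32
    rw [hLm] at this; linarith
  have hXp : 32 * s ^ 2 * Q ^ 6 * Λ
      < 8 * Q ^ 4 - (9 * s * M ^ 2 - 8 * Q ^ 2) * (9 * s * M ^ 2 - 8 * Q ^ 2 + 4 * Q ^ 2)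
        + 3 * (M * (9 * s * M ^ 2 - 8 * Q ^ 2) * t) := by
    have := mul_lt_mul_of_pos_right hhi h32
    rw [hLp] at this; linarith
  -- key algebraic identities
  have keym : s * ((3 * s * M - t) / 2) ^ 4 *
      (8 * Q ^ 4 - (9 * s * M ^ 2 - 8 * Q ^ 2) * (9 * s * M ^ 2 - 8 * Q ^ 2 + 4 * Q ^ 2)
        - 3 * (M * (9 * s * M ^ 2 - 8 * Q ^ 2) * t))
      = 96 * s ^ 2 * Q ^ 6 * (s * M * ((3 * s * M - t) / 2) - s * Q ^ 2) := by
    linear_combination ((-3/2:ℝ)*s*Q^4*t^2 + (3/2:ℝ)*s*M*Q^2*t^3 + (12:ℝ)*s^2*Q^6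
      + (6:ℝ)*s^2*M*Q^4*t + (-45/4:ℝ)*s^2*M^2*Q^2*t^2 + (-27/16:ℝ)*s^2*M^3*t^3
      + (-9/2:ℝ)*s^3*M^2*Q^4 + (27:ℝ)*s^3*M^3*Q^2*t + (243/16:ℝ)*s^3*M^4*t^2
      + (-81/4:ℝ)*s^4*M^4*Q^2 + (-729/16:ℝ)*s^4*M^5*t + (729/16:ℝ)*s^5*M^6) * ht2
  have keyp : s * ((3 * s * M + t) / 2) ^ 4 *
      (8 * Q ^ 4 - (9 * s * M ^ 2 - 8 * Q ^ 2) * (9 * s * M ^ 2 - 8 * Q ^ 2 + 4 * Q ^ 2)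
        + 3 * (M * (9 * s * M ^ 2 - 8 * Q ^ 2) * t))
      = 96 * s ^ 2 * Q ^ 6 * (s * M * ((3 * s * M + t) / 2) - s * Q ^ 2) := by
    linear_combination ((-3/2:ℝ)*s*Q^4*t^2 + (-3/2:ℝ)*s*M*Q^2*t^3 + (12:ℝ)*s^2*Q^6
      + (-6:ℝ)*s^2*M*Q^4*t + (-45/4:ℝ)*s^2*M^2*Q^2*t^2 + (27/16:ℝ)*s^2*M^3*t^3
      + (-9/2:ℝ)*s^3*M^2*Q^4 + (-27:ℝ)*s^3*M^3*Q^2*t + (243/16:ℝ)*s^3*M^4*t^2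
      + (-81/4:ℝ)*s^4*M^4*Q^2 + (729/16:ℝ)*s^4*M^5*t + (729/16:ℝ)*s^5*M^6) * ht2
  -- P at ρ∓
  have hPmeq : P M Q Λ s ((3 * s * M - t) / 2)
      = s * Λ * ((3 * s * M - t) / 2) ^ 4 / 3 - s * M * ((3 * s * M - t) / 2) + s * Q ^ 2 := by
    unfold P; linear_combination (-(1:ℝ)/4) * ht2
  have hPpeq : P M Q Λ s ((3 * s * M + t) / 2)
      = s * Λ * ((3 * s * M + t) / 2) ^ 4 / 3 - s * M * ((3 * s * M + t) / 2) + s * Q ^ 2 := by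
    unfold P; linear_combination (-(1:ℝ)/4) * ht2
  have hPm : 0 < P M Q Λ s ((3 * s * M - t) / 2) := by
    have h1 : P M Q Λ s ((3 * s * M - t) / 2)
        = s * ((3 * s * M - t) / 2) ^ 4 *
          (32 * s ^ 2 * Q ^ 6 * Λ
            - (8 * Q ^ 4 - (9 * s * M ^ 2 - 8 * Q ^ 2) * (9 * s * M ^ 2 - 8 * Q ^ 2 + 4 * Q ^ 2)
              - 3 * (M * (9 * s * M ^ 2 - 8 * Q ^ 2) * t))) / (96 * s ^ 2 * Q ^ 6) := by
      rw [hPmeq, eq_div_iff h96.ne']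
      linear_combination keym
    rw [h1]
    exact div_pos (mul_pos (by positivity) (by linarith)) h96
  have hPp : P M Q Λ s ((3 * s * M + t) / 2) < 0 := by
    have h1 : P M Q Λ s ((3 * s * M + t) / 2)
        = s * ((3 * s * M + t) / 2) ^ 4 *
          (32 * s ^ 2 * Q ^ 6 * Λ
            - (8 * Q ^ 4 - (9 * s * M ^ 2 - 8 * Q ^ 2) * (9 * s * M ^ 2 - 8 * Q ^ 2 + 4 * Q ^ 2)
              + 3 * (M * (9 * s * M ^ 2 - 8 * Q ^ 2) * t))) / (96 * s ^ 2 * Q ^ 6) := by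
      rw [hPpeq, eq_div_iff h96.ne']
      linear_combination keyp
    rw [h1]
    exact div_neg_of_neg_of_pos (mul_neg_of_pos_of_neg (by positivity) (by linarith)) h96
  -- continuity and derivative
  have hcont : Continuous (P M Q Λ s) := by unfold P; fun_prop
  have hder : ∀ x : ℝ, HasDerivAt (P M Q Λ s) (P' M Q Λ s x) x := by
    intro x
    have h := ((((hasDerivAt_pow 4 x).const_mul (s * Λ / 3)).sub (hasDerivAt_pow 2 x)).add
      ((hasDerivAt_id' (𝕜 := ℝ) x).const_mul (2 * s * M))).sub_const (s * Q ^ 2)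
    unfold P P'
    convert h using 1
    · rfl
    · rfl
    · rfl
    push_cast; ring
  -- the zero set on [ρ₋, ρ₊]
  set S : Set ℝ := Set.Icc ((3 * s * M - t) / 2) ((3 * s * M + t) / 2) ∩ (P M Q Λ s) ⁻¹' {0}
    with hSdef
  have hSne : S.Nonempty := by
    have h0 : (0:ℝ) ∈ Set.Icc (P M Q Λ s ((3 * s * M + t) / 2))
        (P M Q Λ s ((3 * s * M - t) / 2)) := ⟨hPp.le, hPm.le⟩
    obtain ⟨x, hx, hfx⟩ := intermediate_value_Icc' hmp.le hcont.continuousOn h0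
    exact ⟨x, hx, by simpa using hfx⟩
  have hSclosed : IsClosed S := isClosed_Icc.inter (isClosed_singleton.preimage hcont)
  have hSbdd : BddBelow S := ⟨(3 * s * M - t) / 2, fun y hy => hy.1.1⟩
  set r₀ := sInf S with hr₀def
  have hr₀S : r₀ ∈ S := hSclosed.csInf_mem hSne hSbdd
  have hr₀0 : P M Q Λ s r₀ = 0 := by simpa using hr₀S.2
  have hr₀Icc := hr₀S.1
  have hρmr₀ : (3 * s * M - t) / 2 < r₀ := by
    rcases lt_or_eq_of_le hr₀Icc.1 with h | h
    · exact h
    · exfalso; rw [← h] at hr₀0; linarith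
  have hr₀ρp : r₀ < (3 * s * M + t) / 2 := by
    rcases lt_or_eq_of_le hr₀Icc.2 with h | h
    · exact h
    · exfalso; rw [h] at hr₀0; linarith
  have hbelow : ∀ r, (3 * s * M - t) / 2 ≤ r → r < r₀ → 0 < P M Q Λ s r := by
    intro r h1 h2
    by_contra hcon
    push_neg at hcon
    have h0 : (0:ℝ) ∈ Set.Icc (P M Q Λ s r) (P M Q Λ s ((3 * s * M - t) / 2)) :=
      ⟨hcon, hPm.le⟩
    obtain ⟨y, hy, hfy⟩ := intermediate_value_Icc' h1 hcont.continuousOn h0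
    have hyS : y ∈ S := by
      refine ⟨⟨hy.1, ?_⟩, by simpa using hfy⟩
      exact le_trans hy.2 (le_trans h2.le hr₀Icc.2)
    have := csInf_le hSbdd hyS
    linarith [hy.2]
  -- derivative at r₀ is ≤ 0
  have hderle : P' M Q Λ s r₀ ≤ 0 := by
    have hd := (hder r₀).hasDerivWithinAt (s := Set.Iio r₀)
    have htend := hasDerivWithinAt_iff_tendsto_slope.1 hd
    rw [Set.diff_singleton_eq_self (by simp : r₀ ∉ Set.Iio r₀)] at htend
    have hev : ∀ᶠ r in nhdsWithin r₀ (Set.Iio r₀), slope (P M Q Λ s) r₀ r ≤ 0 := by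
      filter_upwards [Ioo_mem_nhdsLT_of_mem (⟨hρmr₀, le_refl r₀⟩ :
        r₀ ∈ Set.Ioc ((3 * s * M - t) / 2) r₀)] with r hr
      rw [slope_def_field]
      rw [div_nonpos_iff]
      left
      constructor
      · have := hbelow r hr.1.le hr.2
        rw [hr₀0]; linarith
      · linarith [hr.2]
    exact le_of_tendsto htend hev
  refine ⟨r₀, by linarith, hr₀0, ?_⟩
  rcases lt_or_eq_of_le hderle with h | h
  · exact h
  exfalso
  -- P(r₀)=0, P'(r₀)=0 force r₀ ∈ {ρ₋, ρ₊}
  have hq : r₀ ^ 2 - 3 * s * M * r₀ + 2 * s * Q ^ 2 = 0 := by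
    have e1 := hr₀0
    have e2 := h
    unfold P at e1
    unfold P' at e2
    linear_combination (r₀ / 2) * e2 - 2 * e1
  have hfac : (r₀ - (3 * s * M - t) / 2) * (r₀ - (3 * s * M + t) / 2) = 0 := by
    linear_combination hq - (1/4 : ℝ) * ht2
  rcases mul_eq_zero.1 hfac with h' | h'
  · have he : r₀ = (3 * s * M - t) / 2 := by linarith [sub_eq_zero.1 h']
    rw [he] at hr₀0; exact hPm.ne' hr₀0
  · have he : r₀ = (3 * s * M + t) / 2 := by linarith [sub_eq_zero.1 h']
    rw [he] at hr₀0; exact hPp.ne hr₀0
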